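/- Let A : ℝ → Matrix (n×n, ℝ) be continuously differentiable and set d(ν) = det A(ν). Suppose ν₀ ∈ ℝ, u₀ ∈ ℝⁿ with u₀ ≠ 0 satisfies A(ν₀)u₀ = 0, and there exists u₁ ∈ ℝⁿ with A'(ν₀)u₀ + A(ν₀)u₁ = 0. Then d(ν₀) = 0 and d'(ν₀) = 0, i.e., ν₀ is a root of the determinant of multiplicity at least two. -/

import Mathlib

open Matrix

private lemma det_diffAt {n : ℕ} (M : ℝ → Matrix (Fin n) (Fin n) ℝ) (x : ℝ)
    (h : ∀ i j, DifferentiableAt ℝ (fun ν => M ν i j) x) :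
    DifferentiableAt ℝ (fun ν => (M ν).det) x := by
  simp only [Matrix.det_apply']
  exact DifferentiableAt.fun_sum fun σ _ =>
    (DifferentiableAt.fun_finsetProd fun i _ => h (σ i) i).const_mul _

/-- If `A(ν₀)u₀ = 0` with `u₀ ≠ 0` and there is a Jordan chain vector `u₁` with
`A'(ν₀)u₀ + A(ν₀)u₁ = 0`, then the determinant `d(ν) = det A(ν)` has a root of
multiplicity at least two at `ν₀`: `d(ν₀) = 0` and `d'(ν₀) = 0`. -/
theorem stmt1 (n : ℕ) (A : ℝ → Matrix (Fin n) (Fin n) ℝ)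
    (hA : ∀ i j : Fin n, ContDiff ℝ 1 (fun ν : ℝ => A ν i j))
    (d : ℝ → ℝ) (hd : ∀ ν : ℝ, d ν = (A ν).det)
    (ν₀ : ℝ) (u₀ : Fin n → ℝ) (hu₀ : u₀ ≠ 0)
    (h1 : (A ν₀) *ᵥ u₀ = 0)
    (h2 : ∃ u₁ : Fin n → ℝ,
      (Matrix.of fun i j : Fin n => deriv (fun ν : ℝ => A ν i j) ν₀) *ᵥ u₀
        + (A ν₀) *ᵥ u₁ = 0) :
    d ν₀ = 0 ∧ deriv d ν₀ = 0 := by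
  obtain ⟨u₁, hu1⟩ := h2
  -- entrywise differentiability
  have hAd : ∀ i j, DifferentiableAt ℝ (fun ν => A ν i j) ν₀ := fun i j =>
    ((hA i j).differentiable one_ne_zero).differentiableAt
  have hd0 : d ν₀ = 0 := by
    rw [hd]
    exact Matrix.exists_mulVec_eq_zero_iff.mp ⟨u₀, hu₀, h1⟩
  refine ⟨hd0, ?_⟩
  obtain ⟨i, hi⟩ := Function.ne_iff.mp hu₀
  -- the perturbed vector
  set u : ℝ → Fin n → ℝ := fun ν => u₀ + (ν - ν₀) • u₁ with hu_def
  have hu0 : u ν₀ = u₀ := by simp [hu_def]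
  -- g j ν = (A ν *ᵥ u ν) j
  set g : Fin n → ℝ → ℝ := fun j ν => ∑ k, A ν j k * u ν k with hg_def
  have hg0 : ∀ j, g j ν₀ = 0 := by
    intro j
    have := congrFun h1 j
    simpa [hg_def, hu0, Matrix.mulVec, dotProduct] using this
  have hgderiv : ∀ j, HasDerivAt (g j) 0 ν₀ := by
    intro j
    have hterm : ∀ k, HasDerivAt (fun ν => A ν j k * u ν k)
        (deriv (fun ν : ℝ => A ν j k) ν₀ * u₀ k + A ν₀ j k * u₁ k) ν₀ := by
      intro k
      have h1' : HasDerivAt (fun ν : ℝ => A ν j k)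
          (deriv (fun ν : ℝ => A ν j k) ν₀) ν₀ := (hAd j k).hasDerivAt
      have h2' : HasDerivAt (fun ν : ℝ => u ν k) (u₁ k) ν₀ := by
        have : HasDerivAt (fun ν : ℝ => u₀ k + (ν - ν₀) * u₁ k) (u₁ k) ν₀ := by
          simpa using (((hasDerivAt_id ν₀).sub_const ν₀).mul_const (u₁ k)).const_add (u₀ k)
        simpa [hu_def] using this
      simpa [hu0] using h1'.fun_mul h2'
    have hsum := HasDerivAt.fun_sum (fun k (_ : k ∈ Finset.univ) => hterm k)
    have hzero : ∑ k, (deriv (fun ν : ℝ => A ν j k) ν₀ * u₀ k + A ν₀ j k * u₁ k) = 0 := by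
      have := congrFun hu1 j
      simpa [Matrix.mulVec, dotProduct, Finset.sum_add_distrib] using this
    rw [hzero] at hsum
    exact hsum
  -- F ν = (adjugate (A ν) *ᵥ (A ν *ᵥ u ν)) i
  set F : ℝ → ℝ := fun ν => ∑ j, (Matrix.adjugate (A ν)) i j * g j ν with hF_def
  have hadjd : ∀ j, DifferentiableAt ℝ (fun ν => (Matrix.adjugate (A ν)) i j) ν₀ := by
    intro j
    simp only [Matrix.adjugate_apply]
    refine det_diffAt _ _ ?_
    intro a b
    rcases eq_or_ne a j with rfl | hne
    · simp only [Matrix.updateRow_self]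
      exact differentiableAt_const _
    · simp only [Matrix.updateRow_ne hne]
      exact hAd a b
  have hFderiv : HasDerivAt F 0 ν₀ := by
    have hterm : ∀ j, HasDerivAt (fun ν => (Matrix.adjugate (A ν)) i j * g j ν)
        (deriv (fun ν => (Matrix.adjugate (A ν)) i j) ν₀ * g j ν₀
          + (Matrix.adjugate (A ν₀)) i j * 0) ν₀ :=
      fun j => ((hadjd j).hasDerivAt).mul (hgderiv j)
    have hsum := HasDerivAt.fun_sum (fun j (_ : j ∈ Finset.univ) => hterm j)
    have hzero : ∑ j, (deriv (fun ν => (Matrix.adjugate (A ν)) i j) ν₀ * g j ν₀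
        + (Matrix.adjugate (A ν₀)) i j * 0) = 0 := by
      simp [hg0]
    rw [hzero] at hsum
    exact hsum
  -- key identity: d ν * u ν i = F ν
  have key : (fun ν => d ν * u ν i) = F := by
    funext ν
    have hmv : Matrix.adjugate (A ν) *ᵥ (A ν *ᵥ u ν) = d ν • u ν := by
      rw [Matrix.mulVec_mulVec, Matrix.adjugate_mul, hd, Matrix.smul_mulVec,
        Matrix.one_mulVec]
    have := congrFun hmv i
    simp only [Matrix.mulVec, dotProduct, Pi.smul_apply, smul_eq_mul] at this
    simpa [hF_def, hg_def, Matrix.mulVec, dotProduct] using this.symm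
  -- d is differentiable at ν₀
  have hdD : DifferentiableAt ℝ d ν₀ := by
    have : DifferentiableAt ℝ (fun ν => (A ν).det) ν₀ := det_diffAt A ν₀ hAd
    have hfun : d = fun ν => (A ν).det := funext hd
    rw [hfun]
    exact this
  have huD : HasDerivAt (fun ν => u ν i) (u₁ i) ν₀ := by
    have : HasDerivAt (fun ν : ℝ => u₀ i + (ν - ν₀) * u₁ i) (u₁ i) ν₀ := by
      simpa using (((hasDerivAt_id ν₀).sub_const ν₀).mul_const (u₁ i)).const_add (u₀ i)
    simpa [hu_def] using this
  have hprod : HasDerivAt (fun ν => d ν * u ν i)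
      (deriv d ν₀ * u ν₀ i + d ν₀ * u₁ i) ν₀ := (hdD.hasDerivAt).mul huD
  rw [key] at hprod
  have := hprod.unique hFderiv
  rw [hd0, hu0] at this
  simp only [mul_zero, zero_mul, add_zero] at this
  exact (mul_eq_zero.mp this).resolve_right hi
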